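/- arXiv:2408.00271 — 2 statements merged into one kernel-verified Lean document; each statement's English description precedes it below -/
import Mathlib

section
/- For a = (a₁, a₂) ∈ ℚ² ∖ ℤ², define f_a(τ) = (g₂(L_τ) g₃(L_τ)/Δ₀(L_τ)) · ℘_{L_τ}(a₁τ + a₂), where L_τ = τℤ ⊕ ℤ. Then for every γ ∈ SL₂(ℤ), f_a(γτ) = f_{aγ}(τ) for all τ ∈ ℍ, where aγ denotes the row vector-matrix product. -/
open Matrix MatrixGroups

/-- The upper half-plane, as a subset of `ℂ`. -/
def UHP : Set ℂ := {z : ℂ | 0 < z.im}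

/-- The Möbius action of `SL(2, ℤ)` on the upper half-plane. -/
noncomputable def msmul (γ : SL(2, ℤ)) (z : ℂ) : ℂ :=
  (((γ 0 0 : ℤ) : ℂ) * z + ((γ 0 1 : ℤ) : ℂ)) / (((γ 1 0 : ℤ) : ℂ) * z + ((γ 1 1 : ℤ) : ℂ))

/-- `g₂(L) = 60 Σ'_{ω ∈ L} ω⁻⁴` for `L = ω₁ℤ ⊕ ω₂ℤ`. -/
noncomputable def latG2 (ω₁ ω₂ : ℂ) : ℂ :=
  60 * ∑' p : {p : ℤ × ℤ // p ≠ 0}, (((p.1.1 : ℂ) * ω₁ + (p.1.2 : ℂ) * ω₂) ^ 4)⁻¹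

/-- `g₃(L) = 140 Σ'_{ω ∈ L} ω⁻⁶` for `L = ω₁ℤ ⊕ ω₂ℤ`. -/
noncomputable def latG3 (ω₁ ω₂ : ℂ) : ℂ :=
  140 * ∑' p : {p : ℤ × ℤ // p ≠ 0}, (((p.1.1 : ℂ) * ω₁ + (p.1.2 : ℂ) * ω₂) ^ 6)⁻¹

/-- The Weierstrass `℘`-function of the lattice `L = ω₁ℤ ⊕ ω₂ℤ`. -/
noncomputable def wp (ω₁ ω₂ z : ℂ) : ℂ :=
  (z ^ 2)⁻¹ + ∑' p : {p : ℤ × ℤ // p ≠ 0},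
    (((z - ((p.1.1 : ℂ) * ω₁ + (p.1.2 : ℂ) * ω₂)) ^ 2)⁻¹ -
      (((p.1.1 : ℂ) * ω₁ + (p.1.2 : ℂ) * ω₂) ^ 2)⁻¹)

/-- The Fricke function `f_a(τ) = (g₂ g₃ / Δ₀)(L_τ) · ℘_{L_τ}(a₁τ + a₂)`, for
`L_τ = τℤ ⊕ ℤ` and `a = (a₁, a₂) ∈ ℚ²`. -/
noncomputable def fricke (a : ℚ × ℚ) (τ : ℂ) : ℂ :=
  latG2 τ 1 * latG3 τ 1 / (latG2 τ 1 ^ 3 - 27 * latG3 τ 1 ^ 2) *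
    wp τ 1 ((a.1 : ℂ) * τ + (a.2 : ℂ))

/-- `a ∈ ℚ² ∖ ℤ²`. -/
def NotIntVec (a : ℚ × ℚ) : Prop := ¬ ∃ p : ℤ × ℤ, a = ((p.1 : ℚ), (p.2 : ℚ))

/-- The row vector–matrix product `aγ` for `a ∈ ℚ²` and `γ ∈ SL(2, ℤ)`. -/
def vecMulSL (a : ℚ × ℚ) (γ : SL(2, ℤ)) : ℚ × ℚ :=
  (a.1 * (γ 0 0 : ℤ) + a.2 * (γ 1 0 : ℤ), a.1 * (γ 0 1 : ℤ) + a.2 * (γ 1 1 : ℤ))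

/-- The row-vector action of `γ ∈ SL(2, ℤ)` on `ℤ²`, as an equivalence. -/
def sl2RowEquiv (γ : SL(2, ℤ)) : (ℤ × ℤ) ≃ (ℤ × ℤ) where
  toFun p := (p.1 * γ 0 0 + p.2 * γ 1 0, p.1 * γ 0 1 + p.2 * γ 1 1)
  invFun q := (q.1 * γ 1 1 - q.2 * γ 1 0, -(q.1 * γ 0 1) + q.2 * γ 0 0)
  left_inv p := by
    have hdet : (γ 0 0) * (γ 1 1) - (γ 0 1) * (γ 1 0) = 1 := by
      have := γ.2; rw [Matrix.det_fin_two] at this; exact_mod_cast this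
    ext
    · linear_combination p.1 * hdet
    · linear_combination p.2 * hdet
  right_inv q := by
    have hdet : (γ 0 0) * (γ 1 1) - (γ 0 1) * (γ 1 0) = 1 := by
      have := γ.2; rw [Matrix.det_fin_two] at this; exact_mod_cast this
    ext
    · linear_combination q.1 * hdet
    · linear_combination q.2 * hdet

lemma sl2RowEquiv_ne_zero (γ : SL(2, ℤ)) (p : ℤ × ℤ) :
    p ≠ 0 ↔ sl2RowEquiv γ p ≠ 0 := by
  have h0 : sl2RowEquiv γ (0 : ℤ × ℤ) = 0 := by
    simp [sl2RowEquiv, Prod.ext_iff]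
  constructor
  · intro h hc
    exact h ((sl2RowEquiv γ).injective (hc.trans h0.symm))
  · intro h hc
    subst hc
    exact h h0

/-- The induced equivalence on nonzero vectors. -/
def sl2RowEquiv' (γ : SL(2, ℤ)) : {p : ℤ × ℤ // p ≠ 0} ≃ {p : ℤ × ℤ // p ≠ 0} :=
  Equiv.subtypeEquiv (sl2RowEquiv γ) (sl2RowEquiv_ne_zero γ)

lemma tsum_sl2 (γ : SL(2, ℤ)) (f : ℤ × ℤ → ℂ) :
    ∑' p : {p : ℤ × ℤ // p ≠ 0}, f (sl2RowEquiv γ p.1) =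
      ∑' p : {p : ℤ × ℤ // p ≠ 0}, f p.1 :=
  Equiv.tsum_eq (sl2RowEquiv' γ) (fun q => f q.1)

/-- For `a ∈ ℚ² ∖ ℤ²` and every `γ ∈ SL(2, ℤ)`, the Fricke function satisfies
`f_a(γτ) = f_{aγ}(τ)` for all `τ ∈ ℍ`. -/
theorem fricke_slash_action (a : ℚ × ℚ) (ha : NotIntVec a) (γ : SL(2, ℤ))
    (τ : ℂ) (hτ : τ ∈ UHP) :
    fricke a (msmul γ τ) = fricke (vecMulSL a γ) τ := by
  have hdet : (γ 0 0) * (γ 1 1) - (γ 0 1) * (γ 1 0) = 1 := by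
    have := γ.2; rw [Matrix.det_fin_two] at this; exact_mod_cast this
  have hτ' : (0 : ℝ) < τ.im := hτ
  have hj : (((γ 1 0 : ℤ) : ℂ) * τ + ((γ 1 1 : ℤ) : ℂ)) ≠ 0 := by
    intro h
    have him := congrArg Complex.im h
    simp [Complex.add_im, Complex.mul_im, mul_eq_zero] at him
    have hc : (γ 1 0 : ℤ) = 0 := by
      rcases him with h' | h'
      · exact_mod_cast h'
      · exact absurd h' (ne_of_gt hτ')
    rw [hc] at h
    simp at h
    rw [hc, h] at hdet
    simp at hdet
  set j : ℂ := (((γ 1 0 : ℤ) : ℂ) * τ + ((γ 1 1 : ℤ) : ℂ)) with hjdef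
  -- key pointwise identity for lattice vectors
  have key : ∀ p : ℤ × ℤ,
      ((p.1 : ℂ)) * msmul γ τ + (p.2 : ℂ) * 1 =
        (((sl2RowEquiv γ p).1 : ℂ) * τ + ((sl2RowEquiv γ p).2 : ℂ) * 1) / j := by
    intro p
    simp only [sl2RowEquiv, Equiv.coe_fn_mk, msmul]
    rw [← hjdef]
    push_cast
    field_simp
    ring
  have hG2 : latG2 (msmul γ τ) 1 = j ^ 4 * latG2 τ 1 := by
    unfold latG2
    have h1 : ∑' p : {p : ℤ × ℤ // p ≠ 0}, (((p.1.1 : ℂ) * msmul γ τ + (p.1.2 : ℂ) * 1) ^ 4)⁻¹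
        = ∑' p : {p : ℤ × ℤ // p ≠ 0},
            j ^ 4 * ((((sl2RowEquiv γ p.1).1 : ℂ) * τ + ((sl2RowEquiv γ p.1).2 : ℂ) * 1) ^ 4)⁻¹ := by
      refine tsum_congr fun p => ?_
      rw [key p.1, div_pow, inv_div, div_eq_mul_inv]
    have h2 : ∑' p : {p : ℤ × ℤ // p ≠ 0},
        ((((sl2RowEquiv γ p.1).1 : ℂ) * τ + ((sl2RowEquiv γ p.1).2 : ℂ) * 1) ^ 4)⁻¹
        = ∑' p : {p : ℤ × ℤ // p ≠ 0}, (((p.1.1 : ℂ) * τ + (p.1.2 : ℂ) * 1) ^ 4)⁻¹ :=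
      tsum_sl2 γ (fun q => (((q.1 : ℂ) * τ + (q.2 : ℂ) * 1) ^ 4)⁻¹)
    rw [h1, tsum_mul_left, h2]
    ring
  have hG3 : latG3 (msmul γ τ) 1 = j ^ 6 * latG3 τ 1 := by
    unfold latG3
    have h1 : ∑' p : {p : ℤ × ℤ // p ≠ 0}, (((p.1.1 : ℂ) * msmul γ τ + (p.1.2 : ℂ) * 1) ^ 6)⁻¹
        = ∑' p : {p : ℤ × ℤ // p ≠ 0},
            j ^ 6 * ((((sl2RowEquiv γ p.1).1 : ℂ) * τ + ((sl2RowEquiv γ p.1).2 : ℂ) * 1) ^ 6)⁻¹ := by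
      refine tsum_congr fun p => ?_
      rw [key p.1, div_pow, inv_div, div_eq_mul_inv]
    have h2 : ∑' p : {p : ℤ × ℤ // p ≠ 0},
        ((((sl2RowEquiv γ p.1).1 : ℂ) * τ + ((sl2RowEquiv γ p.1).2 : ℂ) * 1) ^ 6)⁻¹
        = ∑' p : {p : ℤ × ℤ // p ≠ 0}, (((p.1.1 : ℂ) * τ + (p.1.2 : ℂ) * 1) ^ 6)⁻¹ :=
      tsum_sl2 γ (fun q => (((q.1 : ℂ) * τ + (q.2 : ℂ) * 1) ^ 6)⁻¹)
    rw [h1, tsum_mul_left, h2]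
    ring
  set w : ℂ := (((vecMulSL a γ).1 : ℂ)) * τ + ((vecMulSL a γ).2 : ℂ) with hw
  have hz : ((a.1 : ℂ)) * msmul γ τ + (a.2 : ℂ) = w / j := by
    rw [hw]
    simp only [vecMulSL, msmul]
    rw [← hjdef]
    push_cast
    field_simp
    ring
  have hwp : wp (msmul γ τ) 1 (((a.1 : ℂ)) * msmul γ τ + (a.2 : ℂ)) = j ^ 2 * wp τ 1 w := by
    rw [hz]
    unfold wp
    rw [mul_add]
    congr 1
    · rw [div_pow, inv_div, div_eq_mul_inv]
    · have h1 : ∑' p : {p : ℤ × ℤ // p ≠ 0},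
          (((w / j - ((p.1.1 : ℂ) * msmul γ τ + (p.1.2 : ℂ) * 1)) ^ 2)⁻¹ -
            (((p.1.1 : ℂ) * msmul γ τ + (p.1.2 : ℂ) * 1) ^ 2)⁻¹)
          = ∑' p : {p : ℤ × ℤ // p ≠ 0}, j ^ 2 *
            (((w - (((sl2RowEquiv γ p.1).1 : ℂ) * τ + ((sl2RowEquiv γ p.1).2 : ℂ) * 1)) ^ 2)⁻¹ -
              ((((sl2RowEquiv γ p.1).1 : ℂ) * τ + ((sl2RowEquiv γ p.1).2 : ℂ) * 1) ^ 2)⁻¹) := by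
        refine tsum_congr fun p => ?_
        rw [key p.1]
        rw [show w / j - (((sl2RowEquiv γ p.1).1 : ℂ) * τ + ((sl2RowEquiv γ p.1).2 : ℂ) * 1) / j =
          (w - (((sl2RowEquiv γ p.1).1 : ℂ) * τ + ((sl2RowEquiv γ p.1).2 : ℂ) * 1)) / j from by
            ring]
        rw [div_pow, inv_div, div_pow, inv_div, div_eq_mul_inv, div_eq_mul_inv]
        ring
      have h2 : ∑' p : {p : ℤ × ℤ // p ≠ 0},
          (((w - (((sl2RowEquiv γ p.1).1 : ℂ) * τ + ((sl2RowEquiv γ p.1).2 : ℂ) * 1)) ^ 2)⁻¹ -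
            ((((sl2RowEquiv γ p.1).1 : ℂ) * τ + ((sl2RowEquiv γ p.1).2 : ℂ) * 1) ^ 2)⁻¹)
          = ∑' p : {p : ℤ × ℤ // p ≠ 0},
            (((w - ((p.1.1 : ℂ) * τ + (p.1.2 : ℂ) * 1)) ^ 2)⁻¹ -
              (((p.1.1 : ℂ) * τ + (p.1.2 : ℂ) * 1) ^ 2)⁻¹) :=
        tsum_sl2 γ (fun q =>
          (((w - ((q.1 : ℂ) * τ + (q.2 : ℂ) * 1)) ^ 2)⁻¹ - (((q.1 : ℂ) * τ + (q.2 : ℂ) * 1) ^ 2)⁻¹))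
      rw [h1, tsum_mul_left, h2]
  -- final assembly
  unfold fricke
  rw [hG2, hG3, hwp, ← hw]
  have h12 : (j ^ 12 : ℂ) ≠ 0 := pow_ne_zero _ hj
  set X := latG2 τ 1
  set Y := latG3 τ 1
  rw [show (j ^ 4 * X) ^ 3 - 27 * (j ^ 6 * Y) ^ 2 = j ^ 12 * (X ^ 3 - 27 * Y ^ 2) from by ring,
    div_mul_eq_mul_div,
    show j ^ 4 * X * (j ^ 6 * Y) * (j ^ 2 * wp τ 1 w) = j ^ 12 * (X * Y * wp τ 1 w) from by ring,
    mul_div_mul_left _ _ h12]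
  exact (div_mul_eq_mul_div (X * Y) (X ^ 3 - 27 * Y ^ 2) (wp τ 1 w)).symm
end

section
/- If a ∈ N^{−1}ℤ² ∖ ℤ², then the Fricke function f_a is invariant under {±I}·Γ(N), i.e., f_a(γτ) = f_a(τ) for all γ ∈ {±I}Γ(N) and τ ∈ ℍ. -/
open Matrix MatrixGroups

open EisensteinSeries Filter Complex

namespace FrickeAux

/-- The lattice point `p₁ τ + p₂`. -/
noncomputable def Lf (τ : ℂ) (p : ℤ × ℤ) : ℂ := (p.1 : ℂ) * τ + (p.2 : ℂ)

/-- `((Lf τ p)²)⁻¹`, which is `0` at `p = 0`. -/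
noncomputable def cc (τ : ℂ) (p : ℤ × ℤ) : ℂ := ((Lf τ p) ^ 2)⁻¹

lemma Lf_add (τ : ℂ) (p q : ℤ × ℤ) : Lf τ (p + q) = Lf τ p + Lf τ q := by
  simp only [Lf, Prod.fst_add, Prod.snd_add]
  push_cast; ring

lemma Lf_zero (τ : ℂ) : Lf τ 0 = 0 := by simp [Lf]

lemma Lf_neg (τ : ℂ) (p : ℤ × ℤ) : Lf τ (-p) = - Lf τ p := by
  simp only [Lf, Prod.fst_neg, Prod.snd_neg]; push_cast; ring

lemma Lf_im (τ : ℂ) (p : ℤ × ℤ) : (Lf τ p).im = (p.1 : ℝ) * τ.im := by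
  simp [Lf, Complex.add_im, Complex.mul_im]

lemma Lf_ne_zero {τ : ℂ} (hτ : 0 < τ.im) {p : ℤ × ℤ} (hp : p ≠ 0) : Lf τ p ≠ 0 := by
  intro h
  have him : (p.1 : ℝ) * τ.im = 0 := by rw [← Lf_im τ p, h]; simp
  have h1 : p.1 = 0 := by
    rcases mul_eq_zero.1 him with h' | h'
    · exact_mod_cast h'
    · exact absurd h' hτ.ne'
  have h2 : (p.2 : ℂ) = 0 := by simpa [Lf, h1] using h
  exact hp (Prod.ext h1 (by exact_mod_cast h2))

lemma vec_ne_zero {p : ℤ × ℤ} (hp : p ≠ 0) : ![p.1, p.2] ≠ 0 := by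
  intro h
  apply hp
  have h0 := congrFun h 0
  have h1 := congrFun h 1
  simp at h0 h1
  exact Prod.ext h0 h1

lemma norm_Lf_ge {τ : ℂ} (hτ : 0 < τ.im) {p : ℤ × ℤ} (hp : p ≠ 0) :
    r ⟨τ, hτ⟩ * ‖![p.1, p.2]‖ ≤ ‖Lf τ p‖ := by
  have := r_mul_max_le (⟨τ, hτ⟩ : UpperHalfPlane) (vec_ne_zero hp)
  simpa [Lf] using this

/-- The majorant `(max(|p₁|,|p₂|)³)⁻¹`. -/
noncomputable def mj (p : ℤ × ℤ) : ℝ := (‖![p.1, p.2]‖ ^ 3)⁻¹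

lemma summable_mj : Summable mj := by
  have h := summable_one_div_norm_rpow (k := 3) (by norm_num)
  have h2 := ((finTwoArrowEquiv ℤ).symm.summable_iff (f := fun x : Fin 2 → ℤ => ‖x‖ ^ (-3 : ℝ))).2 h
  refine h2.congr fun p => ?_
  simp only [Function.comp, finTwoArrowEquiv_symm_apply, mj]
  rw [show (-3 : ℝ) = ((-3 : ℤ) : ℝ) by norm_num, Real.rpow_intCast]
  rw [_root_.zpow_neg, ← zpow_natCast]
  norm_num

lemma finite_small (R : ℝ) : {p : ℤ × ℤ | ‖![p.1, p.2]‖ < R}.Finite := by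
  apply Set.Finite.subset (Set.finite_Icc ((-⌈R⌉, -⌈R⌉) : ℤ × ℤ) (⌈R⌉, ⌈R⌉))
  intro p hp
  simp only [Set.mem_setOf_eq] at hp
  have h1 : |(p.1 : ℝ)| < R := lt_of_le_of_lt
    (by simpa [Int.norm_eq_abs] using norm_le_pi_norm ![p.1, p.2] 0) hp
  have h2 : |(p.2 : ℝ)| < R := lt_of_le_of_lt
    (by simpa [Int.norm_eq_abs] using norm_le_pi_norm ![p.1, p.2] 1) hp
  have h1' : |p.1| ≤ ⌈R⌉ := by
    exact_mod_cast (by push_cast; exact h1.le.trans (Int.le_ceil R) : (|p.1| : ℝ) ≤ ((⌈R⌉ : ℤ) : ℝ))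
  have h2' : |p.2| ≤ ⌈R⌉ := by
    exact_mod_cast (by push_cast; exact h2.le.trans (Int.le_ceil R) : (|p.2| : ℝ) ≤ ((⌈R⌉ : ℤ) : ℝ))
  rw [Set.mem_Icc]
  exact ⟨⟨neg_le_of_abs_le h1', neg_le_of_abs_le h2'⟩,
    le_of_abs_le h1', le_of_abs_le h2'⟩

lemma eventually_big (R : ℝ) : ∀ᶠ p : ℤ × ℤ in cofinite, R ≤ ‖![p.1, p.2]‖ := by
  rw [eventually_cofinite]
  exact (finite_small R).subset fun p hp => by simpa using not_le.1 hp

lemma term_bound {z ω : ℂ} (hz : ‖z‖ * 2 ≤ ‖ω‖) (hω : ω ≠ 0) :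
    ‖((z - ω) ^ 2)⁻¹ - (ω ^ 2)⁻¹‖ ≤ 12 * ‖z‖ * (‖ω‖ ^ 3)⁻¹ := by
  have hω0 : 0 < ‖ω‖ := norm_pos_iff.2 hω
  have hzω : ‖ω‖ / 2 ≤ ‖z - ω‖ := by
    have := norm_sub_norm_le ω z
    have h' : ‖ω - z‖ = ‖z - ω‖ := norm_sub_rev _ _
    linarith [this, h'.symm.le]
  have hzω0 : z - ω ≠ 0 := by
    intro h; rw [h, norm_zero] at hzω; linarith
  have key : ((z - ω) ^ 2)⁻¹ - (ω ^ 2)⁻¹ = (z * (2 * ω - z)) * (((z - ω) ^ 2 * ω ^ 2))⁻¹ := by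
    field_simp
    ring
  rw [key, norm_mul, norm_inv]
  have hd : ‖(z - ω) ^ 2 * ω ^ 2‖ = ‖z - ω‖ ^ 2 * ‖ω‖ ^ 2 := by
    rw [norm_mul, norm_pow, norm_pow]
  rw [hd]
  have hz0 : 0 ≤ ‖z‖ := norm_nonneg z
  have hzω' : 0 < ‖z - ω‖ := norm_pos_iff.2 hzω0
  have hnum : ‖z * (2 * ω - z)‖ ≤ 3 * ‖z‖ * ‖ω‖ := by
    rw [norm_mul]
    have h2c : ‖(2 : ℂ)‖ = 2 := by norm_num
    have : ‖2 * ω - z‖ ≤ 3 * ‖ω‖ := by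
      calc ‖2 * ω - z‖ ≤ ‖2 * ω‖ + ‖z‖ := norm_sub_le _ _
        _ = 2 * ‖ω‖ + ‖z‖ := by rw [norm_mul, h2c]
        _ ≤ 2 * ‖ω‖ + ‖ω‖ := by linarith
        _ = 3 * ‖ω‖ := by ring
    nlinarith
  have hden : ‖ω‖ ^ 4 / 4 ≤ ‖z - ω‖ ^ 2 * ‖ω‖ ^ 2 := by
    have h1 : (‖ω‖ / 2) ^ 2 * ‖ω‖ ^ 2 ≤ ‖z - ω‖ ^ 2 * ‖ω‖ ^ 2 := by
      have := pow_le_pow_left₀ (by positivity) hzω 2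
      nlinarith
    calc ‖ω‖ ^ 4 / 4 = (‖ω‖ / 2) ^ 2 * ‖ω‖ ^ 2 := by ring
      _ ≤ _ := h1
  have hden0 : 0 < ‖z - ω‖ ^ 2 * ‖ω‖ ^ 2 := by positivity
  calc ‖z * (2 * ω - z)‖ * (‖z - ω‖ ^ 2 * ‖ω‖ ^ 2)⁻¹
      ≤ (3 * ‖z‖ * ‖ω‖) * (‖ω‖ ^ 4 / 4)⁻¹ := by
        apply mul_le_mul hnum _ (by positivity) (by positivity)
        exact inv_anti₀ (by positivity) hden
    _ = 12 * ‖z‖ * (‖ω‖ ^ 3)⁻¹ := by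
        rw [inv_div, div_eq_mul_inv, pow_succ, mul_inv]
        have hc : ‖ω‖ * ‖ω‖⁻¹ = 1 := mul_inv_cancel₀ hω0.ne'
        linear_combination (12 * ‖z‖ * (‖ω‖ ^ 3)⁻¹) * hc
  
lemma summable_aux {τ : ℂ} (hτ : 0 < τ.im) (z : ℂ) :
    Summable fun p : ℤ × ℤ => ((z - Lf τ p) ^ 2)⁻¹ - cc τ p := by
  set rz := r (⟨τ, hτ⟩ : UpperHalfPlane) with hrz
  have hr : 0 < rz := r_pos _
  apply Summable.of_norm_bounded_eventually (g := fun p => (12 * ‖z‖ * rz⁻¹ ^ 3) * mj p)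
    (summable_mj.mul_left _)
  filter_upwards [eventually_big (max 1 ((‖z‖ * 2) / rz))] with p hp
  have h1 : (1 : ℝ) ≤ ‖![p.1, p.2]‖ := le_trans (le_max_left _ _) hp
  have hp0 : p ≠ 0 := by
    intro h
    rw [h] at h1
    simp [norm_eq_max_natAbs] at h1
    linarith
  have hLf := norm_Lf_ge hτ hp0
  have h2 : ‖z‖ * 2 ≤ ‖Lf τ p‖ := by
    have hq : (‖z‖ * 2) / rz ≤ ‖![p.1, p.2]‖ := le_trans (le_max_right _ _) hp
    calc ‖z‖ * 2 = rz * ((‖z‖ * 2) / rz) := by field_simp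
      _ ≤ rz * ‖![p.1, p.2]‖ := mul_le_mul_of_nonneg_left hq hr.le
      _ ≤ ‖Lf τ p‖ := hLf
  have hω : Lf τ p ≠ 0 := Lf_ne_zero hτ hp0
  refine (term_bound h2 hω).trans ?_
  have hvpos : (0 : ℝ) < ‖![p.1, p.2]‖ := lt_of_lt_of_le one_pos h1
  have h3 : (rz * ‖![p.1, p.2]‖) ^ 3 ≤ ‖Lf τ p‖ ^ 3 := pow_le_pow_left₀ (by positivity) hLf 3
  have h4 : (‖Lf τ p‖ ^ 3)⁻¹ ≤ ((rz * ‖![p.1, p.2]‖) ^ 3)⁻¹ := inv_anti₀ (by positivity) h3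
  calc 12 * ‖z‖ * (‖Lf τ p‖ ^ 3)⁻¹
      ≤ 12 * ‖z‖ * ((rz * ‖![p.1, p.2]‖) ^ 3)⁻¹ := by
        apply mul_le_mul_of_nonneg_left h4 (by positivity)
    _ = (12 * ‖z‖ * rz⁻¹ ^ 3) * mj p := by
        rw [mul_pow, mul_inv, ← inv_pow]
        unfold mj
        ring

lemma summable_int_aux : Summable fun n : ℤ => ((n : ℝ) ^ 2)⁻¹ := by
  simpa [one_div] using Real.summable_one_div_int_pow.mpr (by norm_num : 1 < 2)

lemma finite_small_int (R : ℝ) : {n : ℤ | |(n : ℝ)| < R}.Finite := by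
  apply Set.Finite.subset (Set.finite_Icc (-⌈R⌉) ⌈R⌉)
  intro n hn
  simp only [Set.mem_setOf_eq] at hn
  have h1 : |n| ≤ ⌈R⌉ := by
    exact_mod_cast (by push_cast; exact hn.le.trans (Int.le_ceil R) : (|n| : ℝ) ≤ ((⌈R⌉ : ℤ) : ℝ))
  rw [Set.mem_Icc]
  exact ⟨neg_le_of_abs_le h1, le_of_abs_le h1⟩

lemma eventually_int_big (R : ℝ) : ∀ᶠ n : ℤ in cofinite, R ≤ |(n : ℝ)| := by
  rw [eventually_cofinite]
  exact (finite_small_int R).subset fun n hn => by simpa using not_le.1 hn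

lemma summable_row_gen (w₀ : ℂ) : Summable fun n : ℤ => ((w₀ + (n : ℂ)) ^ 2)⁻¹ := by
  apply Summable.of_norm_bounded_eventually (g := fun n : ℤ => 4 * ((n : ℝ) ^ 2)⁻¹)
    (summable_int_aux.mul_left _)
  filter_upwards [eventually_int_big (2 * ‖w₀‖ + 1)] with n hn
  have hw0 : (0 : ℝ) ≤ ‖w₀‖ := norm_nonneg _
  have h1 : (1 : ℝ) ≤ |(n : ℝ)| := by linarith
  have hnc : ‖(n : ℂ)‖ = |(n : ℝ)| := by
    exact_mod_cast Complex.norm_intCast n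
  have h2 : |(n : ℝ)| / 2 ≤ ‖w₀ + (n : ℂ)‖ := by
    have key : ‖(n : ℂ)‖ ≤ ‖w₀ + (n : ℂ)‖ + ‖w₀‖ := by
      calc ‖(n : ℂ)‖ = ‖(w₀ + (n : ℂ)) - w₀‖ := by ring_nf
        _ ≤ ‖w₀ + (n : ℂ)‖ + ‖w₀‖ := norm_sub_le _ _
    rw [hnc] at key
    linarith
  have h3 : (|(n : ℝ)| / 2) ^ 2 ≤ ‖w₀ + (n : ℂ)‖ ^ 2 := pow_le_pow_left₀ (by positivity) h2 2
  have h4 : ‖((w₀ + (n : ℂ)) ^ 2)⁻¹‖ = (‖w₀ + (n : ℂ)‖ ^ 2)⁻¹ := by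
    rw [norm_inv, norm_pow]
  rw [h4]
  calc (‖w₀ + (n : ℂ)‖ ^ 2)⁻¹ ≤ ((|(n : ℝ)| / 2) ^ 2)⁻¹ := inv_anti₀ (by positivity) h3
    _ = 4 * ((n : ℝ) ^ 2)⁻¹ := by
      rw [div_pow, _root_.sq_abs]
      rw [inv_div]
      ring

lemma summable_row (τ : ℂ) (m : ℤ) : Summable fun n : ℤ => (((m : ℂ) * τ + (n : ℂ)) ^ 2)⁻¹ :=
  summable_row_gen ((m : ℂ) * τ)

lemma summable_col {τ : ℂ} (hτ : 0 < τ.im) (n : ℤ) :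
    Summable fun m : ℤ => (((m : ℂ) * τ + (n : ℂ)) ^ 2)⁻¹ := by
  apply Summable.of_norm_bounded_eventually (g := fun m : ℤ => (τ.im ^ 2)⁻¹ * ((m : ℝ) ^ 2)⁻¹)
    (summable_int_aux.mul_left _)
  filter_upwards [eventually_cofinite_ne 0] with m hm
  have hm0 : (0 : ℝ) < |(m : ℝ)| := by
    simp only [abs_pos]
    exact_mod_cast hm
  have him : |(m : ℝ)| * τ.im ≤ ‖(m : ℂ) * τ + (n : ℂ)‖ := by
    have h0 : ((m : ℂ) * τ + (n : ℂ)).im = (m : ℝ) * τ.im := by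
      simp [Complex.add_im, Complex.mul_im]
    calc |(m : ℝ)| * τ.im = |(m : ℝ) * τ.im| := by rw [abs_mul, abs_of_pos hτ]
      _ = |((m : ℂ) * τ + (n : ℂ)).im| := by rw [h0]
      _ ≤ ‖(m : ℂ) * τ + (n : ℂ)‖ := by
          exact Complex.abs_im_le_norm _
  have h3 : (|(m : ℝ)| * τ.im) ^ 2 ≤ ‖(m : ℂ) * τ + (n : ℂ)‖ ^ 2 :=
    pow_le_pow_left₀ (by positivity) him 2
  rw [norm_inv, norm_pow]
  calc (‖(m : ℂ) * τ + (n : ℂ)‖ ^ 2)⁻¹ ≤ ((|(m : ℝ)| * τ.im) ^ 2)⁻¹ := inv_anti₀ (by positivity) h3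
    _ = (τ.im ^ 2)⁻¹ * ((m : ℝ) ^ 2)⁻¹ := by
      rw [mul_pow, mul_inv, _root_.sq_abs]
      ring

lemma wp_eq (τ z : ℂ) : wp τ 1 z = (z ^ 2)⁻¹ +
    ∑' q : {p : ℤ × ℤ // p ≠ 0}, (((z - Lf τ q.1) ^ 2)⁻¹ - cc τ q.1) := by
  unfold wp
  congr 1
  apply tsum_congr
  intro q
  simp [Lf, cc]

lemma wp_full {τ : ℂ} (hτ : 0 < τ.im) (z : ℂ) :
    wp τ 1 z = ∑' p : ℤ × ℤ, (((z - Lf τ p) ^ 2)⁻¹ - cc τ p) := by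
  rw [wp_eq, (summable_aux hτ z).tsum_eq_add_tsum_ite 0]
  congr 1
  · simp [Lf_zero, cc]
  · refine Eq.trans (tsum_subtype {p : ℤ × ℤ | p ≠ 0}
      (fun p => ((z - Lf τ p) ^ 2)⁻¹ - cc τ p)) ?_
    apply tsum_congr
    intro p
    rw [Set.indicator_apply]
    by_cases hp : p = 0 <;> simp [hp]

lemma summable_cc_shift {τ : ℂ} (hτ : 0 < τ.im) (p₀ : ℤ × ℤ) :
    Summable fun p : ℤ × ℤ => cc τ p - cc τ (p + p₀) := by
  refine (summable_aux hτ (-(Lf τ p₀))).neg.congr fun p => ?_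
  have h : (-(Lf τ p₀) - Lf τ p) ^ 2 = (Lf τ (p + p₀)) ^ 2 := by rw [Lf_add]; ring
  simp only [cc]
  rw [h]
  ring

lemma summable_cc_row {τ : ℂ} (m : ℤ) : Summable fun n : ℤ => cc τ (m, n) :=
  (summable_row τ m).congr fun n => by simp [cc, Lf]

lemma summable_cc_col {τ : ℂ} (hτ : 0 < τ.im) (n : ℤ) : Summable fun m : ℤ => cc τ (m, n) :=
  (summable_col hτ n).congr fun m => by simp [cc, Lf]

lemma S_vert {τ : ℂ} (hτ : 0 < τ.im) (t : ℤ) :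
    ∑' p : ℤ × ℤ, (cc τ p - cc τ (p + (0, t))) = 0 := by
  rw [(summable_cc_shift hτ (0, t)).tsum_prod]
  have hinner : ∀ m : ℤ, ∑' n : ℤ, (cc τ (m, n) - cc τ ((m, n) + (0, t))) = 0 := by
    intro m
    have hrow : Summable fun n : ℤ => cc τ (m, n) := summable_cc_row m
    have hrow2 : Summable fun n : ℤ => cc τ (m, n + t) := by
      have := ((Equiv.addRight t).summable_iff (f := fun n : ℤ => cc τ (m, n))).2 hrow
      exact this.congr fun n => rfl
    have hco : ∀ n : ℤ, cc τ (m, n) - cc τ ((m, n) + (0, t)) = cc τ (m, n) - cc τ (m, n + t) := by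
      intro n
      have : (m, n) + ((0 : ℤ), t) = (m, n + t) := by simp
      rw [this]
    rw [tsum_congr hco, hrow.tsum_sub hrow2]
    have := (Equiv.addRight t).tsum_eq (fun n : ℤ => cc τ (m, n))
    simp only [Equiv.coe_addRight] at this
    rw [this]
    ring
  rw [tsum_congr hinner]
  simp

lemma S_horiz {τ : ℂ} (hτ : 0 < τ.im) (s : ℤ) :
    ∑' p : ℤ × ℤ, (cc τ p - cc τ (p + (s, 0))) = 0 := by
  have hs := summable_cc_shift hτ (s, 0)
  have he := (Equiv.prodComm ℤ ℤ).tsum_eq (fun p : ℤ × ℤ => cc τ p - cc τ (p + (s, 0)))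
  rw [← he]
  have hs2 : Summable fun q : ℤ × ℤ => cc τ (q.2, q.1) - cc τ ((q.2, q.1) + (s, 0)) := by
    have := ((Equiv.prodComm ℤ ℤ).summable_iff
      (f := fun p : ℤ × ℤ => cc τ p - cc τ (p + (s, 0)))).2 hs
    exact this.congr fun q => rfl
  have heq : ∀ q : ℤ × ℤ, (fun p : ℤ × ℤ => cc τ p - cc τ (p + (s, 0))) ((Equiv.prodComm ℤ ℤ) q)
      = cc τ (q.2, q.1) - cc τ ((q.2, q.1) + (s, 0)) := fun q => rfl
  rw [tsum_congr heq, hs2.tsum_prod]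
  have hinner : ∀ n : ℤ, ∑' m : ℤ, (cc τ (m, n) - cc τ ((m, n) + (s, 0))) = 0 := by
    intro n
    have hcol : Summable fun m : ℤ => cc τ (m, n) := summable_cc_col hτ n
    have hcol2 : Summable fun m : ℤ => cc τ (m + s, n) := by
      have := ((Equiv.addRight s).summable_iff (f := fun m : ℤ => cc τ (m, n))).2 hcol
      exact this.congr fun m => rfl
    have hco : ∀ m : ℤ, cc τ (m, n) - cc τ ((m, n) + (s, 0)) = cc τ (m, n) - cc τ (m + s, n) := by
      intro m
      have : (m, n) + (s, (0 : ℤ)) = (m + s, n) := by simp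
      rw [this]
    rw [tsum_congr hco, hcol.tsum_sub hcol2]
    have := (Equiv.addRight s).tsum_eq (fun m : ℤ => cc τ (m, n))
    simp only [Equiv.coe_addRight] at this
    rw [this]
    ring
  rw [tsum_congr hinner]
  simp

lemma S_shift {τ : ℂ} (hτ : 0 < τ.im) (p₀ : ℤ × ℤ) :
    ∑' p : ℤ × ℤ, (cc τ p - cc τ (p + p₀)) = 0 := by
  obtain ⟨s, t⟩ := p₀
  have h1 : ∀ p : ℤ × ℤ, cc τ p - cc τ (p + (s, t)) =
      (cc τ p - cc τ (p + (0, t))) + (cc τ (p + (0, t)) - cc τ ((p + (0, t)) + (s, 0))) := by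
    intro p
    have hpt : (p + ((0 : ℤ), t)) + (s, (0 : ℤ)) = p + (s, t) := by
      ext <;> simp <;> ring
    rw [hpt]
    ring
  have hsum2 : Summable fun p : ℤ × ℤ => cc τ (p + (0, t)) - cc τ ((p + (0, t)) + (s, 0)) := by
    have := ((Equiv.addRight ((0 : ℤ), t)).summable_iff
      (f := fun p : ℤ × ℤ => cc τ p - cc τ (p + (s, 0)))).2 (summable_cc_shift hτ (s, 0))
    exact this.congr fun p => rfl
  rw [tsum_congr h1, (summable_cc_shift hτ (0, t)).tsum_add hsum2, S_vert hτ t]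
  have he := (Equiv.addRight ((0 : ℤ), t)).tsum_eq
    (fun p : ℤ × ℤ => cc τ p - cc τ (p + (s, 0)))
  simp only [Equiv.coe_addRight] at he
  rw [he, S_horiz hτ s]
  ring

lemma wp_periodic {τ : ℂ} (hτ : 0 < τ.im) (z : ℂ) (p₀ : ℤ × ℤ) :
    wp τ 1 (z + Lf τ p₀) = wp τ 1 z := by
  rw [wp_full hτ, wp_full hτ]
  have he := (Equiv.addRight p₀).tsum_eq
    (fun p : ℤ × ℤ => ((z + Lf τ p₀ - Lf τ p) ^ 2)⁻¹ - cc τ p)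
  simp only [Equiv.coe_addRight] at he
  rw [← he]
  have h1 : ∀ p : ℤ × ℤ, ((z + Lf τ p₀ - Lf τ (p + p₀)) ^ 2)⁻¹ - cc τ (p + p₀)
      = ((((z - Lf τ p) ^ 2)⁻¹ - cc τ p) + (cc τ p - cc τ (p + p₀))) := by
    intro p
    have h2 : z + Lf τ p₀ - Lf τ (p + p₀) = z - Lf τ p := by rw [Lf_add]; ring
    rw [h2]
    ring
  rw [tsum_congr h1, (summable_aux hτ z).tsum_add (summable_cc_shift hτ p₀), S_shift hτ p₀]
  ring

lemma wp_even (τ z : ℂ) : wp τ 1 (-z) = wp τ 1 z := by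
  rw [wp_eq, wp_eq]
  congr 1
  · rw [neg_sq]
  · have hprop : ∀ p : ℤ × ℤ, p ≠ 0 ↔ (Equiv.neg (ℤ × ℤ)) p ≠ 0 := by intro p; simp
    have he := ((Equiv.neg (ℤ × ℤ)).subtypeEquiv hprop).tsum_eq
      (fun q : {p : ℤ × ℤ // p ≠ 0} => ((-z - Lf τ q.1) ^ 2)⁻¹ - cc τ q.1)
    rw [← he]
    apply tsum_congr
    intro q
    have hq : (((Equiv.neg (ℤ × ℤ)).subtypeEquiv hprop q : {p : ℤ × ℤ // p ≠ 0}) : ℤ × ℤ)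
        = -(q : ℤ × ℤ) := rfl
    rw [hq]
    simp only [cc, Lf_neg]
    have h1 : (-z - -Lf τ q.1) ^ 2 = (z - Lf τ q.1) ^ 2 := by ring
    have h2 : (-Lf τ q.1) ^ 2 = (Lf τ q.1) ^ 2 := by ring
    rw [h1, h2]

/-- The linear equivalence of `ℤ²` given by right multiplication by an `SL₂(ℤ)` matrix. -/
def sl2Equiv (A B C D : ℤ) (h : A * D - B * C = 1) : ℤ × ℤ ≃ ℤ × ℤ where
  toFun p := (p.1 * A + p.2 * C, p.1 * B + p.2 * D)
  invFun q := (q.1 * D - q.2 * C, q.2 * A - q.1 * B)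
  left_inv p := by
    have h1 : (p.1 * A + p.2 * C) * D - (p.1 * B + p.2 * D) * C = p.1 := by
      linear_combination p.1 * h
    have h2 : (p.1 * B + p.2 * D) * A - (p.1 * A + p.2 * C) * B = p.2 := by
      linear_combination p.2 * h
    exact Prod.ext h1 h2
  right_inv q := by
    have h1 : (q.1 * D - q.2 * C) * A + (q.2 * A - q.1 * B) * C = q.1 := by
      linear_combination q.1 * h
    have h2 : (q.1 * D - q.2 * C) * B + (q.2 * A - q.1 * B) * D = q.2 := by
      linear_combination q.2 * h
    exact Prod.ext h1 h2

lemma sl2Equiv_ne_iff (A B C D : ℤ) (h : A * D - B * C = 1) (p : ℤ × ℤ) :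
    p ≠ 0 ↔ sl2Equiv A B C D h p ≠ 0 := by
  have h0 : sl2Equiv A B C D h 0 = 0 := by
    show ((0 : ℤ) * A + 0 * C, (0 : ℤ) * B + 0 * D) = 0
    simp
  constructor
  · intro hp hq
    exact hp ((sl2Equiv A B C D h).injective (hq.trans h0.symm))
  · intro hq hp
    exact hq (hp ▸ h0)

section transform

variable {τ : ℂ} {A B C D : ℤ}

lemma hkey (hdet : A * D - B * C = 1) (hτ : 0 < τ.im) (p : ℤ × ℤ) :
    Lf (((A : ℂ) * τ + B) / Lf τ (C, D)) p
      = Lf τ (sl2Equiv A B C D hdet p) / Lf τ (C, D) := by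
  have hw : Lf τ (C, D) ≠ 0 := by
    apply Lf_ne_zero hτ
    intro hcd
    rw [Prod.ext_iff] at hcd
    simp only [Prod.fst_zero, Prod.snd_zero] at hcd
    rw [hcd.1, hcd.2] at hdet
    simp at hdet
  show (p.1 : ℂ) * (((A : ℂ) * τ + B) / Lf τ (C, D)) + (p.2 : ℂ)
      = ((((p.1 * A + p.2 * C : ℤ)) : ℂ) * τ + ((p.1 * B + p.2 * D : ℤ) : ℂ)) / Lf τ (C, D)
  have hw' : (C : ℂ) * τ + (D : ℂ) ≠ 0 := hw
  have hLf : Lf τ (C, D) = (C : ℂ) * τ + (D : ℂ) := rfl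
  rw [hLf, eq_div_iff hw', add_mul, ← mul_div_assoc, div_mul_cancel₀ _ hw']
  push_cast
  ring

lemma inv_pow_div (x w : ℂ) (n : ℕ) : ((x / w) ^ n)⁻¹ = w ^ n * (x ^ n)⁻¹ := by
  rw [div_pow, inv_div, div_eq_mul_inv]

lemma latG2_eq (X : ℂ) : latG2 X 1 =
    60 * ∑' q : {p : ℤ × ℤ // p ≠ 0}, ((Lf X q.1) ^ 4)⁻¹ := by
  unfold latG2
  congr 1
  apply tsum_congr
  intro q
  simp [Lf]

lemma latG3_eq (X : ℂ) : latG3 X 1 =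
    140 * ∑' q : {p : ℤ × ℤ // p ≠ 0}, ((Lf X q.1) ^ 6)⁻¹ := by
  unfold latG3
  congr 1
  apply tsum_congr
  intro q
  simp [Lf]

lemma latG2_transform (hdet : A * D - B * C = 1) (hτ : 0 < τ.im) :
    latG2 (((A : ℂ) * τ + B) / Lf τ (C, D)) 1 = (Lf τ (C, D)) ^ 4 * latG2 τ 1 := by
  set w := Lf τ (C, D)
  rw [latG2_eq, latG2_eq]
  have h1 : ∀ q : {p : ℤ × ℤ // p ≠ 0},
      ((Lf (((A : ℂ) * τ + B) / w) q.1) ^ 4)⁻¹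
        = w ^ 4 * ((Lf τ ((((sl2Equiv A B C D hdet).subtypeEquiv (sl2Equiv_ne_iff A B C D hdet)) q : {p : ℤ × ℤ // p ≠ 0}) : ℤ × ℤ)) ^ 4)⁻¹ := by
    intro q
    show ((Lf (((A : ℂ) * τ + B) / w) q.1) ^ 4)⁻¹ = w ^ 4 * ((Lf τ (sl2Equiv A B C D hdet q.1)) ^ 4)⁻¹
    rw [hkey hdet hτ]
    exact inv_pow_div _ _ _
  rw [tsum_congr h1, tsum_mul_left,
    ((sl2Equiv A B C D hdet).subtypeEquiv (sl2Equiv_ne_iff A B C D hdet)).tsum_eq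
      (fun q : {p : ℤ × ℤ // p ≠ 0} => ((Lf τ q.1) ^ 4)⁻¹)]
  ring

lemma latG3_transform (hdet : A * D - B * C = 1) (hτ : 0 < τ.im) :
    latG3 (((A : ℂ) * τ + B) / Lf τ (C, D)) 1 = (Lf τ (C, D)) ^ 6 * latG3 τ 1 := by
  set w := Lf τ (C, D)
  rw [latG3_eq, latG3_eq]
  have h1 : ∀ q : {p : ℤ × ℤ // p ≠ 0},
      ((Lf (((A : ℂ) * τ + B) / w) q.1) ^ 6)⁻¹
        = w ^ 6 * ((Lf τ ((((sl2Equiv A B C D hdet).subtypeEquiv (sl2Equiv_ne_iff A B C D hdet)) q : {p : ℤ × ℤ // p ≠ 0}) : ℤ × ℤ)) ^ 6)⁻¹ := by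
    intro q
    show ((Lf (((A : ℂ) * τ + B) / w) q.1) ^ 6)⁻¹ = w ^ 6 * ((Lf τ (sl2Equiv A B C D hdet q.1)) ^ 6)⁻¹
    rw [hkey hdet hτ]
    exact inv_pow_div _ _ _
  rw [tsum_congr h1, tsum_mul_left,
    ((sl2Equiv A B C D hdet).subtypeEquiv (sl2Equiv_ne_iff A B C D hdet)).tsum_eq
      (fun q : {p : ℤ × ℤ // p ≠ 0} => ((Lf τ q.1) ^ 6)⁻¹)]
  ring

lemma wp_transform (hdet : A * D - B * C = 1) (hτ : 0 < τ.im) (ζ : ℂ) :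
    wp (((A : ℂ) * τ + B) / Lf τ (C, D)) 1 (ζ / Lf τ (C, D))
      = (Lf τ (C, D)) ^ 2 * wp τ 1 ζ := by
  set w := Lf τ (C, D)
  rw [wp_eq, wp_eq]
  have h1 : ∀ q : {p : ℤ × ℤ // p ≠ 0},
      ((ζ / w - Lf (((A : ℂ) * τ + B) / w) q.1) ^ 2)⁻¹ - cc (((A : ℂ) * τ + B) / w) q.1
        = w ^ 2 * (((ζ - Lf τ ((((sl2Equiv A B C D hdet).subtypeEquiv (sl2Equiv_ne_iff A B C D hdet)) q : {p : ℤ × ℤ // p ≠ 0}) : ℤ × ℤ)) ^ 2)⁻¹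
            - cc τ ((((sl2Equiv A B C D hdet).subtypeEquiv (sl2Equiv_ne_iff A B C D hdet)) q : {p : ℤ × ℤ // p ≠ 0}) : ℤ × ℤ)) := by
    intro q
    show ((ζ / w - Lf (((A : ℂ) * τ + B) / w) q.1) ^ 2)⁻¹ - cc (((A : ℂ) * τ + B) / w) q.1
        = w ^ 2 * (((ζ - Lf τ (sl2Equiv A B C D hdet q.1)) ^ 2)⁻¹ - cc τ (sl2Equiv A B C D hdet q.1))
    unfold cc
    rw [hkey hdet hτ, div_sub_div_same, inv_pow_div, inv_pow_div]
    ring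
  rw [tsum_congr h1, tsum_mul_left,
    ((sl2Equiv A B C D hdet).subtypeEquiv (sl2Equiv_ne_iff A B C D hdet)).tsum_eq
      (fun q : {p : ℤ × ℤ // p ≠ 0} => ((ζ - Lf τ q.1) ^ 2)⁻¹ - cc τ q.1),
    inv_pow_div]
  ring

end transform

end FrickeAux


open FrickeAux in
/-- If `a ∈ N⁻¹ℤ² ∖ ℤ²`, then the Fricke function `f_a` is invariant under `{±I}·Γ(N)`:
`f_a(γτ) = f_a(τ)` for all `γ ∈ {±I}Γ(N)` and all `τ ∈ ℍ`. -/
theorem fricke_invariant_pm_Gamma (N : ℕ) (hN : 0 < N) (a : ℚ × ℚ)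
    (ha : NotIntVec a) (haN : ∃ p : ℤ × ℤ, a = ((p.1 : ℚ) / N, (p.2 : ℚ) / N))
    (γ : SL(2, ℤ))
    (hγ : γ ∈ CongruenceSubgroup.Gamma N ∨ -γ ∈ CongruenceSubgroup.Gamma N)
    (τ : ℂ) (hτ : τ ∈ UHP) :
    fricke a (msmul γ τ) = fricke a τ := by
  obtain ⟨⟨p1, p2⟩, hap⟩ := haN
  have hτ' : 0 < τ.im := hτ
  have ha1 : a.1 = (p1 : ℚ) / N := by rw [hap]
  have ha2 : a.2 = (p2 : ℚ) / N := by rw [hap]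
  have hNQ : (N : ℚ) ≠ 0 := Nat.cast_ne_zero.2 hN.ne'
  have hdet : (γ 0 0 : ℤ) * (γ 1 1 : ℤ) - (γ 0 1 : ℤ) * (γ 1 0 : ℤ) = 1 := by
    have h := γ.2
    rw [Matrix.det_fin_two] at h
    exact h
  have hcong : ∃ ε : ℤ, (ε = 1 ∨ ε = -1) ∧ ∃ s t u v : ℤ,
      (γ 0 0 : ℤ) = ε + N * s ∧ (γ 0 1 : ℤ) = N * t ∧
      (γ 1 0 : ℤ) = N * u ∧ (γ 1 1 : ℤ) = ε + N * v := by
    rcases hγ with h | h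
    · rw [CongruenceSubgroup.Gamma_mem] at h
      obtain ⟨h00, h01, h10, h11⟩ := h
      refine ⟨1, Or.inl rfl, ?_⟩
      have d00 : (N : ℤ) ∣ (γ 0 0 - 1) := by
        rw [← ZMod.intCast_zmod_eq_zero_iff_dvd]
        push_cast
        rw [h00]
        ring
      have d01 : (N : ℤ) ∣ (γ 0 1 : ℤ) := (ZMod.intCast_zmod_eq_zero_iff_dvd _ _).1 h01
      have d10 : (N : ℤ) ∣ (γ 1 0 : ℤ) := (ZMod.intCast_zmod_eq_zero_iff_dvd _ _).1 h10
      have d11 : (N : ℤ) ∣ (γ 1 1 - 1) := by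
        rw [← ZMod.intCast_zmod_eq_zero_iff_dvd]
        push_cast
        rw [h11]
        ring
      obtain ⟨s, hs⟩ := d00
      obtain ⟨t, ht⟩ := d01
      obtain ⟨u, hu⟩ := d10
      obtain ⟨v, hv⟩ := d11
      exact ⟨s, t, u, v, by linarith, ht, hu, by linarith⟩
    · rw [CongruenceSubgroup.Gamma_mem] at h
      obtain ⟨h00, h01, h10, h11⟩ := h
      have hneg : ∀ i j, ((-γ) i j : ℤ) = -((γ i j : ℤ)) := by
        intro i j
        show ((-γ : Matrix.SpecialLinearGroup (Fin 2) ℤ) : Matrix (Fin 2) (Fin 2) ℤ) i j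
          = -(((γ : Matrix.SpecialLinearGroup (Fin 2) ℤ) : Matrix (Fin 2) (Fin 2) ℤ) i j)
        rw [Matrix.SpecialLinearGroup.coe_neg, Matrix.neg_apply]
      rw [hneg 0 0] at h00
      rw [hneg 0 1] at h01
      rw [hneg 1 0] at h10
      rw [hneg 1 1] at h11
      refine ⟨-1, Or.inr rfl, ?_⟩
      have d00 : (N : ℤ) ∣ (γ 0 0 + 1) := by
        rw [← ZMod.intCast_zmod_eq_zero_iff_dvd]
        push_cast at h00 ⊢
        linear_combination -h00
      have d01 : (N : ℤ) ∣ (γ 0 1 : ℤ) := by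
        rw [← ZMod.intCast_zmod_eq_zero_iff_dvd]
        push_cast at h01 ⊢
        linear_combination -h01
      have d10 : (N : ℤ) ∣ (γ 1 0 : ℤ) := by
        rw [← ZMod.intCast_zmod_eq_zero_iff_dvd]
        push_cast at h10 ⊢
        linear_combination -h10
      have d11 : (N : ℤ) ∣ (γ 1 1 + 1) := by
        rw [← ZMod.intCast_zmod_eq_zero_iff_dvd]
        push_cast at h11 ⊢
        linear_combination -h11
      obtain ⟨s, hs⟩ := d00
      obtain ⟨t, ht⟩ := d01
      obtain ⟨u, hu⟩ := d10
      obtain ⟨v, hv⟩ := d11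
      exact ⟨s, t, u, v, by linarith, ht, hu, by linarith⟩
  obtain ⟨ε, hεpm, s, t, u, v, hA, hB, hC, hD⟩ := hcong
  set k1 : ℤ := p1 * s + p2 * u with hk1
  set k2 : ℤ := p1 * t + p2 * v with hk2
  have hwne : FrickeAux.Lf τ ((γ 1 0 : ℤ), (γ 1 1 : ℤ)) ≠ 0 := by
    apply FrickeAux.Lf_ne_zero hτ'
    intro hcd
    rw [Prod.ext_iff] at hcd
    simp only [Prod.fst_zero, Prod.snd_zero] at hcd
    rw [hcd.1, hcd.2] at hdet
    simp at hdet
  have hw' : ((γ 1 0 : ℤ) : ℂ) * τ + ((γ 1 1 : ℤ) : ℂ) ≠ 0 := hwne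
  set q1 : ℚ := a.1 * (γ 0 0 : ℤ) + a.2 * (γ 1 0 : ℤ) with hq1
  set q2 : ℚ := a.1 * (γ 0 1 : ℤ) + a.2 * (γ 1 1 : ℤ) with hq2
  have hq1e : q1 = (ε : ℚ) * a.1 + (k1 : ℚ) := by
    rw [hq1, ha1, ha2, hk1]
    push_cast [hA, hC]
    field_simp
    ring
  have hq2e : q2 = (ε : ℚ) * a.2 + (k2 : ℚ) := by
    rw [hq2, ha1, ha2, hk2]
    push_cast [hB, hD]
    field_simp
    ring
  have hms : msmul γ τ = (((γ 0 0 : ℤ) : ℂ) * τ + ((γ 0 1 : ℤ) : ℂ)) /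
      FrickeAux.Lf τ ((γ 1 0 : ℤ), (γ 1 1 : ℤ)) := rfl
  have harg : (a.1 : ℂ) * msmul γ τ + (a.2 : ℂ) =
      ((q1 : ℂ) * τ + (q2 : ℂ)) / FrickeAux.Lf τ ((γ 1 0 : ℤ), (γ 1 1 : ℤ)) := by
    rw [hms, show FrickeAux.Lf τ ((γ 1 0 : ℤ), (γ 1 1 : ℤ))
      = ((γ 1 0 : ℤ) : ℂ) * τ + ((γ 1 1 : ℤ) : ℂ) from rfl]
    rw [eq_div_iff hw', add_mul, ← mul_div_assoc, div_mul_cancel₀ _ hw']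
    rw [hq1, hq2]
    push_cast
    ring
  have hζz : (q1 : ℂ) * τ + (q2 : ℂ) =
      (ε : ℂ) * ((a.1 : ℂ) * τ + (a.2 : ℂ)) + FrickeAux.Lf τ (k1, k2) := by
    rw [hq1e, hq2e, show FrickeAux.Lf τ (k1, k2) = ((k1 : ℤ) : ℂ) * τ + ((k2 : ℤ) : ℂ) from rfl]
    push_cast
    ring
  have hwp : wp τ 1 ((q1 : ℂ) * τ + (q2 : ℂ)) = wp τ 1 ((a.1 : ℂ) * τ + (a.2 : ℂ)) := by
    rcases hεpm with h1 | h1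
    · rw [hζz, h1, show ((1 : ℤ) : ℂ) * ((a.1 : ℂ) * τ + (a.2 : ℂ)) + FrickeAux.Lf τ (k1, k2)
        = ((a.1 : ℂ) * τ + (a.2 : ℂ)) + FrickeAux.Lf τ (k1, k2) from by push_cast; ring]
      exact FrickeAux.wp_periodic hτ' _ _
    · rw [hζz, h1, show ((-1 : ℤ) : ℂ) * ((a.1 : ℂ) * τ + (a.2 : ℂ)) + FrickeAux.Lf τ (k1, k2)
        = (-((a.1 : ℂ) * τ + (a.2 : ℂ))) + FrickeAux.Lf τ (k1, k2) from by push_cast; ring]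
      rw [FrickeAux.wp_periodic hτ' _ _, FrickeAux.wp_even]
  unfold fricke
  rw [harg, hms, FrickeAux.latG2_transform hdet hτ', FrickeAux.latG3_transform hdet hτ',
    FrickeAux.wp_transform hdet hτ', hwp]
  set w := FrickeAux.Lf τ ((γ 1 0 : ℤ), (γ 1 1 : ℤ)) with hwdef
  set X := latG2 τ 1
  set Y := latG3 τ 1
  set W := wp τ 1 ((a.1 : ℂ) * τ + (a.2 : ℂ))
  have hfac : (w ^ 4 * X) ^ 3 - 27 * (w ^ 6 * Y) ^ 2 = w ^ 12 * (X ^ 3 - 27 * Y ^ 2) := by ring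
  by_cases hY : X ^ 3 - 27 * Y ^ 2 = 0
  · rw [hfac, hY]
    simp
  · rw [hfac]
    have hw12 : w ^ 12 * (X ^ 3 - 27 * Y ^ 2) ≠ 0 := by
      apply mul_ne_zero (pow_ne_zero _ hwne) hY
    field_simp
end
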